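/- arXiv:2511.05549 — 2 statements merged into one kernel-verified Lean document; each statement's English description precedes it below -/
import Mathlib

section
/- The Minimum Cost Maximum Influence (MCMI) subgraph decision problem is NP-hard: the decision version of the Steiner tree problem reduces to it in polynomial time by assigning every node influence score 1 and thresholds α = 1, β = γ. Specifically, for a graph with all node scores equal to 1, a connected subgraph containing all terminals with average node score ≥ 1 and total edge cost ≤ γ exists if and only if a Steiner tree of cost ≤ γ exists. -/
open scoped BigOperators

open SimpleGraph in
private lemma reach_del {W : Type*} (G' : SimpleGraph W) {v w : W}
    (hvw : (G' \ fromEdgeSet {s(v, w)}).Reachable v w) :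
    ∀ x y : W, G'.Reachable x y → (G' \ fromEdgeSet {s(v, w)}).Reachable x y := by
  intro x y ⟨p⟩
  induction p with
  | nil => rfl
  | @cons a b d h q ih =>
    refine Reachable.trans ?_ ih
    by_cases he : s(a, b) = s(v, w)
    · rw [Sym2.eq_iff] at he
      rcases he with ⟨rfl, rfl⟩ | ⟨rfl, rfl⟩
      · exact hvw
      · exact hvw.symm
    · exact Adj.reachable (by simp [fromEdgeSet_adj, he, h])

open SimpleGraph in
private lemma exists_tree_le {V : Type*} [Fintype V] {G : SimpleGraph V} :
    ∀ (n : ℕ) (H : G.Subgraph), H.edgeSet.ncard ≤ n → H.Connected →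
    ∃ H' : G.Subgraph, H' ≤ H ∧ H'.verts = H.verts ∧ H'.coe.IsTree := by
  intro n
  induction n with
  | zero =>
    intro H hn hconn
    by_cases hac : H.coe.IsAcyclic
    · exact ⟨H, le_refl _, rfl, ⟨hconn.coe, hac⟩⟩
    · exfalso
      rw [isAcyclic_iff_forall_adj_isBridge] at hac
      push_neg at hac
      obtain ⟨v, w, hadj, -⟩ := hac
      have hmem : s((v : V), (w : V)) ∈ H.edgeSet := Subgraph.mem_edgeSet.mpr hadj
      have : 0 < H.edgeSet.ncard :=
        Set.ncard_pos (Set.toFinite _) |>.mpr ⟨_, hmem⟩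
      omega
  | succ n ih =>
    intro H hn hconn
    by_cases hac : H.coe.IsAcyclic
    · exact ⟨H, le_refl _, rfl, ⟨hconn.coe, hac⟩⟩
    · rw [isAcyclic_iff_forall_adj_isBridge] at hac
      push_neg at hac
      obtain ⟨v, w, hadj, hnb⟩ := hac
      rw [isBridge_iff] at hnb
      push_neg at hnb
      have hreach : (H.coe \ fromEdgeSet {s(v, w)}).Reachable v w := hnb
      set K : G.Subgraph := H.deleteEdges {s((v : V), (w : V))} with hK
      have hKle : K ≤ H := Subgraph.deleteEdges_le _
      have hKverts : K.verts = H.verts := Subgraph.deleteEdges_verts _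
      -- K.coe equals H.coe.deleteEdges {s(v,w)}
      have hcoe : H.coe.deleteEdges {s(v, w)} = K.coe := by
        have himg : Sym2.map (Subtype.val : H.verts → V) '' {s(v, w)} = {s((v : V), (w : V))} := by
          rw [Set.image_singleton, Sym2.map_pair_eq]
        rw [Subgraph.deleteEdges_coe_eq, himg]
      have hKconn : K.Connected := by
        rw [Subgraph.connected_iff']
        rw [SimpleGraph.connected_iff]
        constructor
        · intro x y
          have hxy : H.coe.Reachable x y := hconn.coe.preconnected x y
          have := reach_del H.coe hreach x y hxy
          have hde : H.coe.deleteEdges {s(v, w)} = H.coe \ fromEdgeSet {s(v, w)} := rfl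
          rw [← hcoe, hde]
          -- need reachable in K.coe; but K.coe has different vertex type? No:
          -- K.verts = H.verts, but as types they are distinct coercions.
          exact this
        · rw [Set.nonempty_coe_sort, hKverts]
          exact hconn.nonempty
      have hmem : s((v : V), (w : V)) ∈ H.edgeSet := Subgraph.mem_edgeSet.mpr hadj
      have hsub : K.edgeSet ⊆ H.edgeSet \ {s((v : V), (w : V))} := by
        intro e he
        refine ⟨Subgraph.edgeSet_mono hKle he, ?_⟩
        intro hee
        rw [Set.mem_singleton_iff] at hee
        subst hee
        rw [Subgraph.mem_edgeSet, hK, Subgraph.deleteEdges_adj] at he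
        exact he.2 rfl
      have hcard : K.edgeSet.ncard ≤ n := by
        have h1 : K.edgeSet.ncard ≤ (H.edgeSet \ {s((v : V), (w : V))}).ncard :=
          Set.ncard_le_ncard hsub (Set.toFinite _)
        have h2 : (H.edgeSet \ {s((v : V), (w : V))}).ncard < H.edgeSet.ncard :=
          Set.ncard_diff_singleton_lt_of_mem hmem (Set.toFinite _)
        omega
      obtain ⟨H', hle, hverts, htree⟩ := ih K hcard hKconn
      exact ⟨H', le_trans hle hKle, hverts.trans hKverts, htree⟩

/-- NP-hardness reduction from Steiner tree to MCMI: with all node influence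
scores equal to 1 and thresholds `α = 1`, `β = γ`, a connected subgraph
containing all terminals with average node score ≥ 1 and total edge cost ≤ γ
exists iff a Steiner tree (a tree containing all terminals) of cost ≤ γ
exists. -/
theorem mcmi_feasible_iff_steiner_feasible
    {V : Type*} [Fintype V] (G : SimpleGraph V) (hG : G.Connected)
    (c : Sym2 V → ℝ) (hc : ∀ e, 0 ≤ c e)
    (term : Set V) (γ : ℝ) (hγ : 0 < γ)
    (s : V → ℝ) (hs : ∀ v, s v = 1) :
    (∃ H : G.Subgraph, H.Connected ∧ term ⊆ H.verts ∧
        1 ≤ (1 / (H.verts.ncard : ℝ)) * ∑ᶠ v ∈ H.verts, s v ∧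
        ∑ᶠ e ∈ H.edgeSet, c e ≤ γ) ↔
    (∃ H : G.Subgraph, H.coe.IsTree ∧ term ⊆ H.verts ∧
        ∑ᶠ e ∈ H.edgeSet, c e ≤ γ) := by
  constructor
  · rintro ⟨H, hconn, hterm, -, hcost⟩
    obtain ⟨H', hle, hverts, htree⟩ := exists_tree_le H.edgeSet.ncard H le_rfl hconn
    refine ⟨H', htree, hverts ▸ hterm, le_trans ?_ hcost⟩
    have hsub : H'.edgeSet ⊆ H.edgeSet := SimpleGraph.Subgraph.edgeSet_mono hle
    rw [← Set.Finite.coe_toFinset (Set.toFinite H'.edgeSet), finsum_mem_coe_finset,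
        ← Set.Finite.coe_toFinset (Set.toFinite H.edgeSet), finsum_mem_coe_finset]
    refine Finset.sum_le_sum_of_subset_of_nonneg ?_ (fun e _ _ => hc e)
    intro e he
    simp only [Set.Finite.mem_toFinset] at he ⊢
    exact hsub he
  · rintro ⟨H, htree, hterm, hcost⟩
    have hconn : H.Connected := ⟨htree.isConnected⟩
    refine ⟨H, hconn, hterm, ?_, hcost⟩
    have hne : H.verts.Nonempty := hconn.nonempty
    have hn : (0 : ℝ) < (H.verts.ncard : ℝ) := by
      exact_mod_cast Set.ncard_pos (Set.toFinite _) |>.mpr hne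
    have hsum : ∑ᶠ v ∈ H.verts, s v = (H.verts.ncard : ℝ) := by
      rw [← Set.Finite.coe_toFinset (Set.toFinite H.verts), finsum_mem_coe_finset]
      have : ∀ v ∈ (Set.toFinite H.verts).toFinset, s v = 1 := fun v _ => hs v
      rw [Finset.sum_congr rfl this, Finset.sum_const, nsmul_eq_mul, mul_one]
      norm_cast
    rw [hsum, one_div, inv_mul_cancel₀ (ne_of_gt hn)]
end

section
/- In a metric graph (complete graph whose edge costs satisfy the triangle inequality), the cost of a minimum spanning tree on the terminal set is at most twice the cost of an optimal Steiner tree connecting the terminals. -/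
namespace MSTAux
open SimpleGraph
section ListCost



variable {V : Type*}

/-- cost of a list of vertices: sum of consecutive costs -/
def lcost (c : V → V → ℝ) : List V → ℝ
  | a :: b :: r => c a b + lcost c (b :: r)
  | _ => 0

@[simp] lemma lcost_nil (c : V → V → ℝ) : lcost c [] = 0 := rfl
@[simp] lemma lcost_single (c : V → V → ℝ) (a : V) : lcost c [a] = 0 := rfl
@[simp] lemma lcost_cons_cons (c : V → V → ℝ) (a b : V) (r : List V) :
    lcost c (a :: b :: r) = c a b + lcost c (b :: r) := rfl

variable {c : V → V → ℝ} (hnonneg : ∀ u v, 0 ≤ c u v)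
include hnonneg

lemma lcost_nonneg : ∀ l : List V, 0 ≤ lcost c l
  | [] => le_refl _
  | [_] => le_refl _
  | a :: b :: r => add_nonneg (hnonneg a b) (lcost_nonneg (b :: r))

lemma lcost_le_cons : ∀ (a : V) (l : List V), lcost c l ≤ lcost c (a :: l)
  | _, [] => le_refl _
  | a, b :: r => le_add_of_nonneg_left (hnonneg a b)

lemma lcost_le_append : ∀ (p l : List V), lcost c l ≤ lcost c (p ++ l)
  | [], l => le_refl _
  | a :: p, l => le_trans (lcost_le_append p l) (lcost_le_cons hnonneg a (p ++ l))

omit hnonneg in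
lemma lcost_append_cons (a : V) : ∀ (p q : List V),
    lcost c (p ++ a :: q) = lcost c (p ++ [a]) + lcost c (a :: q)
  | [], q => by simp
  | [b], q => by simp
  | b :: d :: p, q => by
    have := lcost_append_cons a (d :: p) q
    simp only [List.cons_append, lcost_cons_cons] at *
    rw [this]; ring

variable (htri : ∀ u w x, c u x ≤ c u w + c w x)
include htri

lemma lcost_cons_le_step (a b : V) : ∀ l : List V, lcost c (a :: l) ≤ c a b + lcost c (b :: l)
  | [] => by simp [hnonneg a b]
  | x :: r => by
    simp only [lcost_cons_cons]
    have := htri a b x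
    linarith

lemma lcost_cons_le_of_sublist {l₁ l₂ : List V} (h : List.Sublist l₁ l₂) :
    ∀ a : V, lcost c (a :: l₁) ≤ lcost c (a :: l₂) := by
  induction h with
  | slnil => intro a; simp
  | cons b h ih =>
    intro a
    exact le_trans (ih a) (by simpa using lcost_cons_le_step hnonneg htri a b _)
  | cons_cons b h ih =>
    intro a
    simp only [lcost_cons_cons]
    linarith [ih b]

lemma lcost_le_of_sublist {l₁ l₂ : List V} (h : List.Sublist l₁ l₂) :
    lcost c l₁ ≤ lcost c l₂ := by
  cases l₁ with
  | nil => exact lcost_nonneg hnonneg l₂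
  | cons a t =>
    obtain ⟨p, q, rfl, hap, htq⟩ := List.cons_sublist_iff.mp h
    obtain ⟨p₁, p₂, rfl⟩ := List.append_of_mem hap
    have h2 : List.Sublist t (p₂ ++ q) := htq.trans (List.sublist_append_right _ _)
    calc lcost c (a :: t) ≤ lcost c (a :: (p₂ ++ q)) :=
          lcost_cons_le_of_sublist hnonneg htri h2 a
    _ ≤ lcost c (p₁ ++ a :: (p₂ ++ q)) := lcost_le_append hnonneg _ _
    _ = lcost c (p₁ ++ a :: p₂ ++ q) := by rw [List.append_assoc, List.cons_append]



end ListCost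
section Graphs





variable {W : Type*} {G : SimpleGraph W}

/-- the base point of a cycle has two distinct neighbors -/
lemma cycle_two_neighbors {u : W} {q : G.Walk u u} (hq : q.IsCycle) :
    ∃ a b : W, a ≠ b ∧ G.Adj u a ∧ G.Adj u b := by
  cases q with
  | nil => exact absurd rfl hq.ne_nil
  | cons h r =>
    rename_i b
    have hbu : b ≠ u := h.ne'
    have hnn : ¬ r.reverse.Nil := SimpleGraph.Walk.not_nil_of_ne (Ne.symm hbu)
    obtain ⟨a, h', r', heq⟩ := SimpleGraph.Walk.not_nil_iff.mp hnn
    refine ⟨a, b, ?_, h', h⟩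
    have hmem : s(u, a) ∈ r.edges := by
      have : s(u, a) ∈ r.reverse.edges := by rw [heq]; simp
      simpa [SimpleGraph.Walk.edges_reverse] using this
    intro hab
    subst hab
    have hnd := hq.edges_nodup
    rw [SimpleGraph.Walk.edges_cons] at hnd
    exact (List.nodup_cons.mp hnd).1 (by simpa [Sym2.eq_swap] using hmem)

/-- an interior vertex of a path has two distinct neighbors -/
lemma path_interior_two_neighbors {x y u : W} {p : G.Walk x y} (hp : p.IsPath)
    (hu : u ∈ p.support) (hux : u ≠ x) (huy : u ≠ y) :
    ∃ a b : W, a ≠ b ∧ G.Adj u a ∧ G.Adj u b := by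
  classical
  set q := p.takeUntil u hu with hqdef
  set r := p.dropUntil u hu with hrdef
  have hspec : q.append r = p := p.take_spec hu
  have hnq : ¬ q.reverse.Nil := SimpleGraph.Walk.not_nil_of_ne hux
  obtain ⟨a, ha, q', hq'⟩ := SimpleGraph.Walk.not_nil_iff.mp hnq
  have hnr : ¬ r.Nil := SimpleGraph.Walk.not_nil_of_ne huy
  obtain ⟨b, hb, r', hr'⟩ := SimpleGraph.Walk.not_nil_iff.mp hnr
  refine ⟨a, b, ?_, ha, hb⟩
  have hnd : (q.support ++ r.support.tail).Nodup := by
    rw [← SimpleGraph.Walk.support_append, hspec]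
    exact hp.support_nodup
  have haq : a ∈ q.support := by
    have : a ∈ q.reverse.support := by
      rw [hq']; simp [SimpleGraph.Walk.support_cons]
    simpa [SimpleGraph.Walk.support_reverse] using this
  have hbr : b ∈ r.support.tail := by
    rw [hr']; simp [SimpleGraph.Walk.support_cons]
  exact fun hab => (List.disjoint_of_nodup_append hnd) haq (hab ▸ hbr)

/-- a finite tree with more than one vertex has a leaf -/
lemma tree_exists_leaf [Fintype W] (hT : G.IsTree) (h2 : 1 < Fintype.card W) :
    ∃ u v : W, G.Adj u v ∧ ∀ w, G.Adj u w → w = v := by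
  classical
  have hdeg : ∀ u : W, ∃ w, G.Adj u w := by
    intro u
    obtain ⟨w, hw⟩ := Fintype.exists_ne_of_one_lt_card h2 u
    obtain ⟨p⟩ := hT.isConnected.preconnected u w
    cases p with
    | nil => exact absurd rfl hw
    | cons h r => exact ⟨_, h⟩
  haveI := Classical.decEq W
  haveI : DecidableRel G.Adj := Classical.decRel _
  have hsum := SimpleGraph.sum_degrees_eq_twice_card_edges G
  have hcard := hT.card_edgeFinset
  have hone : ∃ u : W, G.degree u ≤ 1 := by
    by_contra hc
    push_neg at hc
    have h1 : ∀ u ∈ (Finset.univ : Finset W), 2 ≤ G.degree u := fun u _ => hc u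
    have := Finset.sum_le_sum h1
    simp only [Finset.sum_const, Finset.card_univ, smul_eq_mul] at this
    rw [hsum] at this
    omega
  obtain ⟨u, hu⟩ := hone
  have hpos : 0 < G.degree u := (SimpleGraph.degree_pos_iff_exists_adj G u).mpr (hdeg u)
  have h1 : G.degree u = 1 := le_antisymm hu hpos
  obtain ⟨v, hv⟩ := Finset.card_eq_one.mp h1
  refine ⟨u, v, ?_, ?_⟩
  · have : v ∈ G.neighborFinset u := by rw [hv]; simp
    exact (SimpleGraph.mem_neighborFinset G u v).mp this
  · intro w hw
    have : w ∈ G.neighborFinset u := (SimpleGraph.mem_neighborFinset G u w).mpr hw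
    rw [hv] at this
    simpa using this







variable {W : Type*} {G : SimpleGraph W}

/-- inclusion homomorphism from an induced subgraph -/
def induceOut (G : SimpleGraph W) (s : Set W) : G.induce s →g G :=
  ⟨Subtype.val, fun {a b} h => h⟩

lemma induceOut_injective {s : Set W} : Function.Injective (induceOut G s) :=
  Subtype.val_injective

lemma reachable_induce_of_support {s : Set W} :
    ∀ {x y : W} (p : G.Walk x y), (∀ z ∈ p.support, z ∈ s) →
      ∀ (hx : x ∈ s) (hy : y ∈ s), (G.induce s).Reachable ⟨x, hx⟩ ⟨y, hy⟩
  | _, _, SimpleGraph.Walk.nil, _, _, _ => Reachable.refl _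
  | x, y, @SimpleGraph.Walk.cons _ _ _ b _ hadj q, h, hx, hy => by
    have hb : b ∈ s := h b (by simp)
    have h1 : (G.induce s).Adj ⟨x, hx⟩ ⟨b, hb⟩ := hadj
    exact h1.reachable.trans
      (reachable_induce_of_support q (fun z hz => h z (by simp [hz])) hb hy)



end Graphs

section Tour
variable {V : Type*} [Fintype V]

/-- The edges of `G` inside `s`. -/
def insideEdges (G : SimpleGraph V) (s : Set V) : Set (Sym2 V) :=
  {e | e ∈ G.edgeSet ∧ ∀ x ∈ e, x ∈ s}

variable {c : V → V → ℝ} (hsymm : ∀ u v, c u v = c v u)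
  (hnonneg : ∀ u v, 0 ≤ c u v)
include hsymm hnonneg

lemma insideEdges_nonneg (G : SimpleGraph V) (s : Set V) :
    0 ≤ ∑ᶠ e ∈ insideEdges G s, Sym2.lift ⟨c, hsymm⟩ e := by
  rw [finsum_mem_eq_finite_toFinset_sum _ (Set.toFinite _)]
  refine Finset.sum_nonneg fun e _ => ?_
  induction e with
  | h x y => simpa using hnonneg x y

theorem tour (G : SimpleGraph V) :
    ∀ (n : ℕ) (s : Set V), s.ncard = n → (G.induce s).IsTree →
    ∃ l : List V, l ≠ [] ∧ (∀ v ∈ l, v ∈ s) ∧ (∀ v ∈ s, v ∈ l) ∧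
      lcost c l ≤ 2 * ∑ᶠ e ∈ insideEdges G s, Sym2.lift ⟨c, hsymm⟩ e := by
  classical
  intro n
  induction n using Nat.strong_induction_on with
  | _ n IH =>
  intro s hn hT
  haveI : Fintype ↥s := (Set.toFinite s).fintype
  have hcards : Fintype.card ↥s = s.ncard := by
    rw [Set.ncard_eq_toFinset_card']
    simp [Set.toFinset_card]
  have hne : s.Nonempty := by
    have : Nonempty ↥s := hT.isConnected.nonempty
    exact Set.nonempty_coe_sort.mp this
  rcases eq_or_lt_of_le (show 1 ≤ s.ncard from (Set.ncard_pos (Set.toFinite s)).mpr hne) with h1 | h2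
  · -- singleton case
    obtain ⟨v, hv⟩ := Set.ncard_eq_one.mp h1.symm
    refine ⟨[v], by simp, by simp [hv], by simp [hv], ?_⟩
    have h0 := insideEdges_nonneg hsymm hnonneg G s
    simp only [lcost_single]
    linarith
  · -- at least two vertices: find a leaf
    obtain ⟨uhat, vhat, hadj, huniq⟩ := tree_exists_leaf hT (by rw [hcards]; omega)
    obtain ⟨u, hus⟩ := uhat
    obtain ⟨v, hvs⟩ := vhat
    have hGuv : G.Adj u v := hadj
    have huv : u ≠ v := hGuv.ne
    set s' : Set V := s \ {u} with hs'def
    have hvs' : v ∈ s' := ⟨hvs, by simp [huv.symm]⟩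
    have hsub : s' ⊆ s := Set.diff_subset
    have hn' : s'.ncard = n - 1 := by
      rw [hs'def, Set.ncard_diff_singleton_of_mem hus, hn]
    have hlt : n - 1 < n := by omega
    -- s' induces a tree
    have hT' : (G.induce s').IsTree := by
      constructor
      · -- connected
        haveI : Nonempty ↥s' := ⟨⟨v, hvs'⟩⟩
        refine ⟨fun x' y' => ?_⟩
        obtain ⟨x, hx⟩ := x'
        obtain ⟨y, hy⟩ := y'
        obtain ⟨w⟩ := hT.isConnected.preconnected ⟨x, hsub hx⟩ ⟨y, hsub hy⟩
        set p := w.toPath with hpdef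
        have hup : (⟨u, hus⟩ : ↥s) ∉ (p : (G.induce s).Path _ _).val.support := by
          intro hmem
          have hux : (⟨u, hus⟩ : ↥s) ≠ ⟨x, hsub hx⟩ := by
            simp only [ne_eq, Subtype.mk.injEq]
            exact fun h => hx.2 (by simp [← h])
          have huy : (⟨u, hus⟩ : ↥s) ≠ ⟨y, hsub hy⟩ := by
            simp only [ne_eq, Subtype.mk.injEq]
            exact fun h => hy.2 (by simp [← h])
          obtain ⟨a, b, hab, ha, hb⟩ :=
            path_interior_two_neighbors p.2 hmem hux huy
          exact hab ((huniq a ha).trans (huniq b hb).symm)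
        -- map the path up and back down into s'
        have hsupp : ∀ z ∈ ((p : (G.induce s).Path _ _).val.map (induceOut G s)).support, z ∈ s' := by
          intro z hz
          rw [SimpleGraph.Walk.support_map, List.mem_map] at hz
          obtain ⟨⟨z', hz's⟩, hz'mem, rfl⟩ := hz
          refine ⟨hz's, ?_⟩
          simp only [Set.mem_singleton_iff]
          intro hzu
          have hzeq : (⟨z', hz's⟩ : ↥s) = ⟨u, hus⟩ := Subtype.ext hzu
          rw [hzeq] at hz'mem
          exact hup hz'mem
        exact reachable_induce_of_support _ hsupp hx hy
      · -- acyclic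
        intro x' q hq
        have := (hq.map (f := (G.induceHomOfLE hsub).toHom)
          (G.induceHomOfLE hsub).injective)
        exact hT.IsAcyclic _ this
    -- the edge set splits
    have hsplit : insideEdges G s = insert s(u, v) (insideEdges G s') := by
      ext e
      induction e with
      | h x y =>
        simp only [insideEdges, Set.mem_insert_iff, Set.mem_setOf_eq, Sym2.mem_iff,
          SimpleGraph.mem_edgeSet]
        constructor
        · rintro ⟨hxy, hmem⟩
          have hxs := hmem x (Or.inl rfl)
          have hys := hmem y (Or.inr rfl)
          by_cases hxu : x = u
          · subst hxu
            have : (⟨y, hys⟩ : ↥s) = ⟨v, hvs⟩ := huniq ⟨y, hys⟩ hxy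
            left
            simp [Subtype.mk.injEq] at this
            rw [this]
          · by_cases hyu : y = u
            · subst hyu
              have : (⟨x, hxs⟩ : ↥s) = ⟨v, hvs⟩ := huniq ⟨x, hxs⟩ hxy.symm
              simp [Subtype.mk.injEq] at this
              left
              rw [this, Sym2.eq_swap]
            · right
              refine ⟨hxy, ?_⟩
              rintro z (rfl | rfl)
              · exact ⟨hxs, by simpa using hxu⟩
              · exact ⟨hys, by simpa using hyu⟩
        · rintro (heq | ⟨hxy, hmem⟩)
          · rw [Sym2.eq_iff] at heq
            rcases heq with ⟨rfl, rfl⟩ | ⟨rfl, rfl⟩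
            · exact ⟨hGuv, by rintro z (rfl | rfl) <;> assumption⟩
            · exact ⟨hGuv.symm, by rintro z (rfl | rfl) <;> assumption⟩
          · exact ⟨hxy, fun z hz => hsub ((hmem z hz))⟩
    have hnotin : s(u, v) ∉ insideEdges G s' := by
      simp only [insideEdges, Set.mem_setOf_eq, not_and]
      intro _
      push_neg
      exact ⟨u, by simp, fun h => h.2 rfl⟩
    have hsum : ∑ᶠ e ∈ insideEdges G s, Sym2.lift ⟨c, hsymm⟩ e
        = c u v + ∑ᶠ e ∈ insideEdges G s', Sym2.lift ⟨c, hsymm⟩ e := by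
      rw [hsplit, finsum_mem_insert _ hnotin (Set.toFinite _)]
      simp
    -- recurse
    obtain ⟨l', hl'ne, hl'sub, hl'cov, hl'cost⟩ := IH (n - 1) hlt s' hn' hT'
    obtain ⟨p, q, rfl⟩ := List.append_of_mem (hl'cov v hvs')
    refine ⟨p ++ v :: u :: v :: q, by simp, ?_, ?_, ?_⟩
    · intro z hz
      simp only [List.mem_append, List.mem_cons] at hz
      rcases hz with hz | rfl | rfl | rfl | hz
      · exact hsub (hl'sub z (by simp [hz]))
      · exact hvs
      · exact hus
      · exact hvs
      · exact hsub (hl'sub z (by simp [hz]))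
    · intro z hzs
      by_cases hzu : z = u
      · subst hzu; simp
      · have : z ∈ p ++ v :: q := hl'cov z ⟨hzs, by simpa using hzu⟩
        simp only [List.mem_append, List.mem_cons] at this ⊢
        tauto
    · have e1 : lcost c (p ++ v :: u :: v :: q)
          = lcost c (p ++ [v]) + (c v u + (c u v + lcost c (v :: q))) := by
        rw [lcost_append_cons v p (u :: v :: q)]
        simp
      have e2 : lcost c (p ++ v :: q) = lcost c (p ++ [v]) + lcost c (v :: q) :=
        lcost_append_cons v p q
      rw [hsum]
      rw [hsymm v u] at e1
      linarith
end Tour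





section PathGraph
variable {V : Type*}

/-- the path graph given by consecutive elements of a list -/
def fromList (t : List V) : SimpleGraph V :=
  SimpleGraph.fromRel (fun a b => [a, b] <:+: t)

lemma fromList_adj {t : List V} {x y : V} :
    (fromList t).Adj x y ↔ x ≠ y ∧ ([x, y] <:+: t ∨ [y, x] <:+: t) :=
  SimpleGraph.fromRel_adj _ x y

lemma infix_pair_mem {x y : V} {t : List V} (h : [x, y] <:+: t) : x ∈ t ∧ y ∈ t :=
  ⟨h.subset (by simp), h.subset (by simp)⟩

lemma prefix_pair_iff {x y a : V} {r : List V} :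
    [x, y] <+: (a :: r) ↔ x = a ∧ ∃ r', r = y :: r' := by
  rw [List.cons_prefix_cons]
  refine and_congr Iff.rfl ?_
  cases r with
  | nil => simp
  | cons b r' =>
    rw [List.cons_prefix_cons]
    simp [eq_comm]

lemma infix_pair_cons_iff {x y a : V} {r : List V} :
    [x, y] <:+: (a :: r) ↔ (x = a ∧ ∃ r', r = y :: r') ∨ [x, y] <:+: r := by
  rw [List.infix_cons_iff, prefix_pair_iff]

lemma fromList_nil_adj {x y : V} : ¬ (fromList ([] : List V)).Adj x y := by
  rw [fromList_adj]
  rintro ⟨-, h | h⟩ <;> exact absurd (infix_pair_mem h).1 (by simp)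

lemma fromList_single_adj {a x y : V} : ¬ (fromList [a]).Adj x y := by
  rw [fromList_adj]
  rintro ⟨hne, h | h⟩
  · rcases infix_pair_cons_iff.mp h with ⟨rfl, r', hr⟩ | h'
    · simp at hr
    · exact absurd (infix_pair_mem h').1 (by simp)
  · rcases infix_pair_cons_iff.mp h with ⟨rfl, r', hr⟩ | h'
    · simp at hr
    · exact absurd (infix_pair_mem h').1 (by simp)

/-- adjacency to the head of the list -/
lemma fromList_head_adj {a y : V} {r : List V} (ha : a ∉ r)
    (h : (fromList (a :: r)).Adj a y) : ∃ r', r = y :: r' := by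
  rw [fromList_adj] at h
  obtain ⟨hne, h | h⟩ := h
  · rcases infix_pair_cons_iff.mp h with ⟨-, hr⟩ | h'
    · exact hr
    · exact absurd (infix_pair_mem h').1 ha
  · rcases infix_pair_cons_iff.mp h with ⟨rfl, -⟩ | h'
    · exact absurd rfl hne
    · exact absurd (infix_pair_mem h').2 ha

lemma fromList_cons_le {a : V} {r : List V} : fromList r ≤ fromList (a :: r) := by
  intro x y h
  rw [fromList_adj] at h ⊢
  have hr : r <:+: a :: r := (List.suffix_cons a r).isInfix
  exact ⟨h.1, h.2.imp (fun h' => h'.trans hr) (fun h' => h'.trans hr)⟩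

end PathGraph





section PathGraph2
variable {V : Type*}

lemma fromList_isAcyclic : ∀ (t : List V), t.Nodup → (fromList t).IsAcyclic := by
  classical
  intro t
  induction t with
  | nil => intro _ x q hq; cases q with
    | nil => exact hq.ne_nil rfl
    | cons h r => exact fromList_nil_adj h
  | cons a r ih =>
    intro hnd x q hq
    have har : a ∉ r := (List.nodup_cons.mp hnd).1
    by_cases hmem : a ∈ q.support
    · have hq' := hq.rotate hmem
      obtain ⟨y, z, hyz, hy, hz⟩ := cycle_two_neighbors hq'
      obtain ⟨r₁, hr₁⟩ := fromList_head_adj har hy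
      obtain ⟨r₂, hr₂⟩ := fromList_head_adj har hz
      rw [hr₁] at hr₂
      injection hr₂ with h1 h2
      exact hyz h1
    · have hedges : ∀ e ∈ q.edges, e ∈ (fromList r).edgeSet := by
        intro e he
        induction e with
        | h x' y' =>
          have hx' : x' ∈ q.support := SimpleGraph.Walk.fst_mem_support_of_mem_edges q he
          have hy' : y' ∈ q.support := SimpleGraph.Walk.snd_mem_support_of_mem_edges q he
          have hadj : (fromList (a :: r)).Adj x' y' := SimpleGraph.Walk.adj_of_mem_edges q he
          rw [SimpleGraph.mem_edgeSet, fromList_adj]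
          rw [fromList_adj] at hadj
          refine ⟨hadj.1, hadj.2.imp ?_ ?_⟩
          · intro h'
            rcases infix_pair_cons_iff.mp h' with ⟨rfl, -⟩ | h'' 
            · exact absurd hx' hmem
            · exact h''
          · intro h'
            rcases infix_pair_cons_iff.mp h' with ⟨rfl, -⟩ | h''
            · exact absurd hy' hmem
            · exact h''
      exact ih (List.nodup_cons.mp hnd).2 _ (hq.transfer hedges)

lemma fromList_induce_connected :
    ∀ (t : List V), t.Nodup → t ≠ [] → ((fromList t).induce {v | v ∈ t}).Connected := by
  intro t
  induction t with
  | nil => intro _ h; exact absurd rfl h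
  | cons a r ih =>
    intro hnd _
    have har : a ∉ r := (List.nodup_cons.mp hnd).1
    haveI : Nonempty ↥{v | v ∈ a :: r} := ⟨⟨a, by simp⟩⟩
    cases r with
    | nil =>
      refine ⟨fun x' y' => ?_⟩
      obtain ⟨x, hx⟩ := x'
      obtain ⟨y, hy⟩ := y'
      simp only [Set.mem_setOf_eq, List.mem_singleton] at hx hy
      subst hx; subst hy
      rfl
    | cons b r' =>
      have hab : a ≠ b := fun h => har (by rw [h]; exact List.mem_cons_self)
      have hadj : ((fromList (a :: b :: r')).induce {v | v ∈ a :: b :: r'}).Adj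
          ⟨a, by simp⟩ ⟨b, by simp⟩ := by
        show (fromList (a :: b :: r')).Adj a b
        rw [fromList_adj]
        exact ⟨hab, Or.inl ⟨[], r', by simp⟩⟩
      have hle : fromList (b :: r') ≤ fromList (a :: b :: r') := fromList_cons_le
      have hmapsto : Set.MapsTo id {v | v ∈ b :: r'} {v | v ∈ a :: b :: r'} := by
        intro z hz; simp at hz ⊢; tauto
      let f := SimpleGraph.induceHom (SimpleGraph.Hom.ofLE hle) hmapsto
      have hconn' := ih (List.nodup_cons.mp hnd).2 (by simp)
      have hreach : ∀ (x : V) (hx : x ∈ ({v | v ∈ a :: b :: r'} : Set V)),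
          ((fromList (a :: b :: r')).induce {v | v ∈ a :: b :: r'}).Reachable
            ⟨x, hx⟩ ⟨b, by simp⟩ := by
        intro x hx
        rcases (by simpa using hx : x = a ∨ x ∈ b :: r') with rfl | hmem
        · exact hadj.reachable
        · have := hconn'.preconnected ⟨x, hmem⟩ ⟨b, by simp⟩
          have := this.map f
          exact this
      refine ⟨fun x' y' => ?_⟩
      obtain ⟨x, hx⟩ := x'
      obtain ⟨y, hy⟩ := y'
      exact (hreach x hx).trans (hreach y hy).symm

end PathGraph2


section EdgeCost
variable {V : Type*} [Fintype V] {c : V → V → ℝ}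
  (hsymm : ∀ u v, c u v = c v u) (hnonneg : ∀ u v, 0 ≤ c u v)

lemma fromList_edgeSet_cons {a b : V} {r : List V} (ha : a ∉ b :: r) :
    (fromList (a :: b :: r)).edgeSet = insert s(a, b) (fromList (b :: r)).edgeSet := by
  ext e
  induction e with
  | h x y =>
    simp only [SimpleGraph.mem_edgeSet, Set.mem_insert_iff]
    constructor
    · intro h
      rw [fromList_adj] at h
      obtain ⟨hne, h | h⟩ := h
      · rcases infix_pair_cons_iff.mp h with ⟨rfl, r', hr⟩ | h'
        · left; rw [Sym2.eq_iff]; left; exact ⟨rfl, by injection hr with h1 _; exact h1.symm⟩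
        · right; rw [fromList_adj]; exact ⟨hne, Or.inl h'⟩
      · rcases infix_pair_cons_iff.mp h with ⟨rfl, r', hr⟩ | h'
        · left; rw [Sym2.eq_iff]; right; exact ⟨by injection hr with h1 _; exact h1.symm, rfl⟩
        · right; rw [fromList_adj]; exact ⟨hne, Or.inr h'⟩
    · rintro (heq | hmem)
      · have hadj : (fromList (a :: b :: r)).Adj a b := by
          rw [fromList_adj]
          refine ⟨fun h => ha (by rw [h]; exact List.mem_cons_self), Or.inl ⟨[], r, by simp⟩⟩
        rw [Sym2.eq_iff] at heq
        rcases heq with ⟨rfl, rfl⟩ | ⟨rfl, rfl⟩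
        · exact hadj
        · exact hadj.symm
      · exact fromList_cons_le hmem

lemma fromList_edge_not_mem {a b : V} {r : List V} (ha : a ∉ b :: r) :
    s(a, b) ∉ (fromList (b :: r)).edgeSet := by
  rw [SimpleGraph.mem_edgeSet, fromList_adj]
  rintro ⟨hne, h | h⟩
  · exact ha (infix_pair_mem h).1
  · exact ha (infix_pair_mem h).2

include hsymm hnonneg in
lemma fromList_finsum_le :
    ∀ (t : List V), t.Nodup →
      ∑ᶠ e ∈ (fromList t).edgeSet, Sym2.lift ⟨c, hsymm⟩ e ≤ lcost c t := by
  intro t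
  induction t with
  | nil =>
    intro _
    have : (fromList ([] : List V)).edgeSet = ∅ := by
      ext e; induction e with
      | h x y => simpa using fromList_nil_adj (x := x) (y := y)
    simp [this]
  | cons a r ih =>
    intro hnd
    cases r with
    | nil =>
      have : (fromList [a]).edgeSet = ∅ := by
        ext e; induction e with
        | h x y => simpa using fromList_single_adj (a := a) (x := x) (y := y)
      simp [this]
    | cons b r' =>
      have ha : a ∉ b :: r' := (List.nodup_cons.mp hnd).1
      rw [fromList_edgeSet_cons ha,
        finsum_mem_insert _ (fromList_edge_not_mem ha) (Set.toFinite _)]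
      have := ih (List.nodup_cons.mp hnd).2
      simp only [lcost_cons_cons, Sym2.lift_mk]
      linarith

end EdgeCost

section Final
variable {W : Type*}

lemma isAcyclic_induce {G : SimpleGraph W} (h : G.IsAcyclic) (s : Set W) :
    (G.induce s).IsAcyclic := fun _ q hq =>
  h _ ((SimpleGraph.Walk.map_isCycle_iff_of_injective
    (f := induceOut G s) induceOut_injective).mpr hq)

end Final
end MSTAux

open scoped BigOperators

/-- In a finite complete graph with metric edge costs (symmetric, zero on the
diagonal, triangle inequality), for every Steiner tree spanning the terminal
set there is a spanning tree on the terminal set alone of cost at most twice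
the Steiner tree's cost; hence the minimum spanning tree on the terminals
costs at most twice the optimal Steiner tree. -/
theorem mst_on_terminals_le_two_steiner
    {V : Type*} [Fintype V]
    (c : V → V → ℝ) (hsymm : ∀ u v, c u v = c v u)
    (hdiag : ∀ v, c v v = 0) (hnonneg : ∀ u v, 0 ≤ c u v)
    (htri : ∀ u v w, c u w ≤ c u v + c v w)
    (term : Set V) (hterm : term.Nonempty)
    (H : (⊤ : SimpleGraph V).Subgraph)
    (hHtree : H.coe.IsTree) (hHterm : term ⊆ H.verts) :
    ∃ H' : (⊤ : SimpleGraph V).Subgraph,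
      H'.verts = term ∧ H'.coe.IsTree ∧
      ∑ᶠ e ∈ H'.edgeSet, Sym2.lift ⟨c, hsymm⟩ e ≤
        2 * ∑ᶠ e ∈ H.edgeSet, Sym2.lift ⟨c, hsymm⟩ e := by
  classical
  -- view the Steiner tree as an induced subgraph of its spanning coercion
  have hcoe : H.coe = H.spanningCoe.induce H.verts := by
    ext ⟨x, hx⟩ ⟨y, hy⟩
    simp [SimpleGraph.Subgraph.spanningCoe]
  have hTree : (H.spanningCoe.induce H.verts).IsTree := hcoe ▸ hHtree
  have hEdge : MSTAux.insideEdges H.spanningCoe H.verts = H.edgeSet := by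
    ext e
    induction e with
    | h x y =>
      simp only [MSTAux.insideEdges, Set.mem_setOf_eq, SimpleGraph.mem_edgeSet,
        SimpleGraph.Subgraph.spanningCoe_adj, SimpleGraph.Subgraph.mem_edgeSet, Sym2.mem_iff]
      constructor
      · rintro ⟨h, -⟩; exact h
      · intro h
        refine ⟨h, ?_⟩
        rintro z (rfl | rfl)
        · exact h.fst_mem
        · exact h.snd_mem
  obtain ⟨l, hlne, hlsub, hlcov, hlcost⟩ :=
    MSTAux.tour hsymm hnonneg H.spanningCoe H.verts.ncard H.verts rfl hTree
  -- shortcut: keep one occurrence of each terminal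
  set t : List V := (l.filter (fun v => v ∈ term)).dedup with htdef
  have htsub : List.Sublist t l := (List.dedup_sublist _).trans List.filter_sublist
  have htmem : ∀ v, v ∈ t ↔ v ∈ term := by
    intro v
    rw [htdef, List.mem_dedup, List.mem_filter]
    constructor
    · rintro ⟨-, h⟩; simpa using h
    · intro h; exact ⟨hlcov v (hHterm h), by simpa using h⟩
  have htnd : t.Nodup := List.nodup_dedup _
  have htne : t ≠ [] := by
    obtain ⟨v, hv⟩ := hterm
    intro h
    have := (htmem v).mpr hv
    rw [h] at this
    simp at this
  let H' : (⊤ : SimpleGraph V).Subgraph :=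
    { verts := {v | v ∈ t}
      Adj := (MSTAux.fromList t).Adj
      adj_sub := fun h => by simpa using (MSTAux.fromList_adj.mp h).1
      edge_vert := fun h => by
        rcases (MSTAux.fromList_adj.mp h).2 with h' | h'
        · exact (MSTAux.infix_pair_mem h').1
        · exact (MSTAux.infix_pair_mem h').2
      symm := ⟨fun v w h => h.symm⟩ }
  refine ⟨H', ?_, ?_, ?_⟩
  · exact Set.ext fun v => htmem v
  · have hConn := MSTAux.fromList_induce_connected t htnd htne
    have hAcyc := MSTAux.isAcyclic_induce (MSTAux.fromList_isAcyclic t htnd) {v | v ∈ t}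
    exact ⟨hConn, hAcyc⟩
  · have hES : H'.edgeSet = (MSTAux.fromList t).edgeSet := by
      ext e
      induction e with
      | h x y =>
        simp only [SimpleGraph.Subgraph.mem_edgeSet, SimpleGraph.mem_edgeSet]
        exact Iff.rfl
    rw [hES]
    calc ∑ᶠ e ∈ (MSTAux.fromList t).edgeSet, Sym2.lift ⟨c, hsymm⟩ e
        ≤ MSTAux.lcost c t := MSTAux.fromList_finsum_le hsymm hnonneg t htnd
      _ ≤ MSTAux.lcost c l := MSTAux.lcost_le_of_sublist hnonneg
          (fun u w x => htri u w x) htsub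
      _ ≤ 2 * ∑ᶠ e ∈ MSTAux.insideEdges H.spanningCoe H.verts, Sym2.lift ⟨c, hsymm⟩ e := hlcost
      _ = 2 * ∑ᶠ e ∈ H.edgeSet, Sym2.lift ⟨c, hsymm⟩ e := by rw [hEdge]
end
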